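/- Let V₀ be a complex Hermitian space of signature (1, n-1), let u₂ be a unit vector (⟨u₂,u₂⟩ = 1), and suppose T ∈ V₀ is nonzero with ⟨T,T⟩ = 0. Then the infimum over h ∈ U(V₀) of |⟨u₂, T·h⟩| is 0, while ⟨u₂, T·h⟩ ≠ 0 for all h ∈ U(V₀). -/

import Mathlib

/-- The Hermitian form of signature `(1, n-1)` on `V₀ = ℂ × W` (where `W` carries a
positive definite inner product giving the negative definite part). -/
noncomputable def herm {W : Type*} [NormedAddCommGroup W] [InnerProductSpace ℂ W]
    (v w : ℂ × W) : ℂ :=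
  v.1 * (starRingEnd ℂ) w.1 - (inner ℂ w.2 v.2 : ℂ)

section Boost

variable {W : Type*} [NormedAddCommGroup W] [InnerProductSpace ℂ W]

/-- Hyperbolic boost in the plane spanned by `(1,0)` and `(0,u)`. -/
noncomputable def boost (u : W) (A B : ℝ) : (ℂ × W) →ₗ[ℂ] (ℂ × W) where
  toFun p := ((A : ℂ) * p.1 + (B : ℂ) * (inner ℂ u p.2 : ℂ),
    p.2 + ((((A : ℂ) - 1) * (inner ℂ u p.2 : ℂ) + (B : ℂ) * p.1) • u))
  map_add' x y := by
    refine Prod.ext ?_ ?_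
    · simp [inner_add_right]; ring
    · simp only [Prod.snd_add, Prod.fst_add, inner_add_right]
      module
  map_smul' c x := by
    refine Prod.ext ?_ ?_
    · simp [inner_smul_right]; ring
    · simp only [Prod.smul_snd, Prod.smul_fst, inner_smul_right, RingHom.id_apply,
        smul_eq_mul]
      module

lemma boost_apply (u : W) (A B : ℝ) (p : ℂ × W) :
    boost u A B p = ((A : ℂ) * p.1 + (B : ℂ) * (inner ℂ u p.2 : ℂ),
      p.2 + ((((A : ℂ) - 1) * (inner ℂ u p.2 : ℂ) + (B : ℂ) * p.1) • u)) := rfl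

lemma boost_comp (u : W) (hu : (inner ℂ u u : ℂ) = 1) (A B A' B' : ℝ) :
    (boost u A B) ∘ₗ (boost u A' B') = boost u (A*A'+B*B') (A*B'+B*A') := by
  refine LinearMap.ext fun p => Prod.ext ?_ ?_ <;>
    simp only [LinearMap.coe_comp, Function.comp_apply, boost_apply, inner_add_right,
      inner_smul_right, hu, mul_one]
  · push_cast
    ring
  · match_scalars <;> push_cast <;> ring

lemma boost_one (u : W) : boost u 1 0 = LinearMap.id := by
  refine LinearMap.ext fun p => Prod.ext ?_ ?_ <;> simp [boost_apply]

lemma boost_herm (u : W) (hu : (inner ℂ u u : ℂ) = 1) {A B : ℝ}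
    (hAB : A^2 - B^2 = 1) (v w : ℂ × W) :
    herm (boost u A B v) (boost u A B w) = herm v w := by
  have hA2 : (A : ℂ) * A = (B : ℂ) * B + 1 := by
    have h := congrArg (Complex.ofReal) hAB; push_cast at h; linear_combination h
  simp only [herm, boost_apply, inner_add_right, inner_add_left, inner_smul_right,
    inner_smul_left, hu, mul_one, map_add, map_mul, map_sub, map_one,
    Complex.conj_ofReal, Complex.conj_conj]
  rw [show (inner ℂ u v.2 : ℂ) = (starRingEnd ℂ) (inner ℂ v.2 u : ℂ) from
      (inner_conj_symm _ _).symm,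
    show (inner ℂ u w.2 : ℂ) = (starRingEnd ℂ) (inner ℂ w.2 u : ℂ) from
      (inner_conj_symm _ _).symm]
  simp only [Complex.conj_conj]
  linear_combination (v.1 * (starRingEnd ℂ) w.1 -
    (starRingEnd ℂ) (inner ℂ v.2 u : ℂ) * (inner ℂ w.2 u : ℂ)) * hA2

/-- The boost as a linear equivalence, for `A² - B² = 1`. -/
noncomputable def boostEquiv (u : W) (hu : (inner ℂ u u : ℂ) = 1) (A B : ℝ)
    (hAB : A^2 - B^2 = 1) : (ℂ × W) ≃ₗ[ℂ] (ℂ × W) :=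
  LinearEquiv.ofLinear (boost u A B) (boost u A (-B))
    (by rw [boost_comp u hu]
        have h1 : A*A + B*(-B) = 1 := by nlinarith [hAB]
        have h2 : A*(-B) + B*A = 0 := by ring
        rw [h1, h2, boost_one])
    (by rw [boost_comp u hu]
        have h1 : A*A + (-B)*B = 1 := by nlinarith [hAB]
        have h2 : A*B + (-B)*A = 0 := by ring
        rw [h1, h2, boost_one])

lemma boostEquiv_apply (u : W) (hu : (inner ℂ u u : ℂ) = 1) (A B : ℝ)
    (hAB : A^2 - B^2 = 1) (p : ℂ × W) :
    boostEquiv u hu A B hAB p = boost u A B p := rfl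

lemma herm_one_zero (x : ℂ × W) :
    herm ((1 : ℂ), (0 : W)) x = (starRingEnd ℂ) x.1 := by
  simp [herm]

end Boost

/-- For `T ≠ 0` isotropic, `⟨u₂, T·h⟩` never vanishes as `h` ranges over the unitary
group of the form, but its absolute value has infimum `0`. Here `u₂ = (1,0)`. -/
theorem isotropic_pairing_inf_zero (W : Type*) [NormedAddCommGroup W]
    [InnerProductSpace ℂ W] [FiniteDimensional ℂ W]
    (T : ℂ × W) (hT0 : T ≠ 0) (hTiso : herm T T = 0) :
    (∀ g : (ℂ × W) ≃ₗ[ℂ] (ℂ × W), (∀ v w, herm (g v) (g w) = herm v w) →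
      herm ((1 : ℂ), (0 : W)) (g T) ≠ 0) ∧
    (∀ ε : ℝ, 0 < ε → ∃ g : (ℂ × W) ≃ₗ[ℂ] (ℂ × W),
      (∀ v w, herm (g v) (g w) = herm v w) ∧
        ‖herm ((1 : ℂ), (0 : W)) (g T)‖ < ε) := by
  -- basic consequences of the hypotheses
  have hww : (inner ℂ T.2 T.2 : ℂ) = T.1 * (starRingEnd ℂ) T.1 := by
    have := hTiso; unfold herm at this; linear_combination -this
  have ha : T.1 ≠ 0 := by
    intro h
    apply hT0
    have : (inner ℂ T.2 T.2 : ℂ) = 0 := by rw [hww, h]; ring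
    have h2 : T.2 = 0 := inner_self_eq_zero.mp this
    exact Prod.ext h h2
  have hw : T.2 ≠ 0 := by
    intro h
    apply ha
    have : T.1 * (starRingEnd ℂ) T.1 = 0 := by rw [← hww, h, inner_zero_left]
    rcases mul_eq_zero.mp this with h' | h'
    · exact h'
    · exact star_eq_zero.mp h'
  constructor
  · intro g hg h0
    rw [herm_one_zero] at h0
    have h1 : (g T).1 = 0 := by
      have := star_eq_zero.mp h0; exact this
    have h2 : herm (g T) (g T) = 0 := by rw [hg]; exact hTiso
    have h3 : (inner ℂ (g T).2 (g T).2 : ℂ) = 0 := by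
      unfold herm at h2; rw [h1] at h2; simpa using h2.symm
    have h4 : (g T).2 = 0 := inner_self_eq_zero.mp h3
    have h5 : g T = 0 := Prod.ext h1 h4
    have h6 : T = 0 := by
      have := g.injective (a₁ := T) (a₂ := 0) (by simpa using h5)
      exact this
    exact hT0 h6
  · intro ε hε
    -- the unit vector u with ⟪u, T.2⟫ = -T.1
    have hnw : (0 : ℝ) < ‖T.2‖ := norm_pos_iff.mpr hw
    have hnw2 : ((‖T.2‖ : ℂ))^2 ≠ 0 :=
      pow_ne_zero 2 (Complex.ofReal_ne_zero.mpr hnw.ne')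
    set μ : ℂ := -(starRingEnd ℂ) T.1 / (‖T.2‖ : ℂ)^2 with hμ
    set u : W := μ • T.2 with hudef
    have hinner_ww : (inner ℂ T.2 T.2 : ℂ) = ((‖T.2‖ : ℂ))^2 := by
      rw [inner_self_eq_norm_sq_to_K]; norm_num
    have hcu : (inner ℂ u T.2 : ℂ) = -T.1 := by
      rw [hudef, inner_smul_left, hinner_ww, hμ]
      simp only [map_div₀, map_neg, Complex.conj_conj]
      rw [show (starRingEnd ℂ) (((‖T.2‖ : ℂ))^2) = ((‖T.2‖ : ℂ))^2 by
        simp [← Complex.ofReal_pow, Complex.conj_ofReal]]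
      field_simp [Complex.ofReal_ne_zero.mpr hnw.ne']
    have hu : (inner ℂ u u : ℂ) = 1 := by
      rw [hudef, inner_smul_left, inner_smul_right, hinner_ww, hμ]
      rw [show (starRingEnd ℂ) (-(starRingEnd ℂ) T.1 / (‖T.2‖ : ℂ)^2)
          = -T.1 / (‖T.2‖ : ℂ)^2 by
        simp only [map_div₀, map_neg, Complex.conj_conj]
        rw [show (starRingEnd ℂ) (((‖T.2‖ : ℂ))^2) = ((‖T.2‖ : ℂ))^2 by
          simp [← Complex.ofReal_pow, Complex.conj_ofReal]]]
      have : T.1 * (starRingEnd ℂ) T.1 = ((‖T.2‖ : ℂ))^2 := by rw [← hww, hinner_ww]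
      field_simp [Complex.ofReal_ne_zero.mpr hnw.ne']
      linear_combination this
    -- the boost parameter
    have habs : (0 : ℝ) < ‖T.1‖ := by
      simpa using (norm_pos_iff.mpr ha)
    set s : ℝ := ε / (2 * ‖T.1‖) with hs
    have hspos : 0 < s := by positivity
    set A : ℝ := (s + 1/s)/2 with hA
    set B : ℝ := (1/s - s)/2 with hB
    have hAB : A^2 - B^2 = 1 := by
      rw [hA, hB]; field_simp; ring
    refine ⟨boostEquiv u hu A B hAB, fun v w' => boost_herm u hu hAB v w', ?_⟩
    rw [herm_one_zero, boostEquiv_apply, boost_apply]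
    have hval : (A : ℂ) * T.1 + (B : ℂ) * (inner ℂ u T.2 : ℂ) = ((A - B : ℝ) : ℂ) * T.1 := by
      rw [hcu]; push_cast; ring
    have hABs : A - B = s := by rw [hA, hB]; ring
    simp only [hval, hABs, map_mul]
    rw [norm_mul, Complex.norm_conj, Complex.norm_conj, Complex.norm_real, Real.norm_eq_abs,
      abs_of_pos hspos, hs]
    rw [div_mul_eq_mul_div, mul_comm]
    rw [div_lt_iff₀ (by positivity)]
    nlinarith [habs, hε]
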